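/- arXiv:2102.06255 — 5 statements merged into one kernel-verified Lean document; each statement's English description precedes it below -/
import Mathlib

section
/- Let n ≥ 1 and let u, v ∈ ℂ^{n+1} satisfy ‖u‖ = 1, ∑_k u_k·conj(v_k) = 0, and v ≠ 0. Set r = ‖v‖ and define ũ_k = (1/√2)(r·u_k + i·v_k) and ṽ_k = (1/√2)(conj(v_k) − i·r·conj(u_k)). Then ∑_k |ũ_k|² = ∑_k |ṽ_k|² = r² ≠ 0 and ∑_k ũ_k·ṽ_k = 0. -/
open Complex Finset

/-- The map `t_C` on `X_C` lands in `X̃_C`: if `‖u‖ = 1`,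
`∑ u_k conj(v_k) = 0` and `v ≠ 0`, then with `r = ‖v‖`,
`ũ_k = (1/√2)(r u_k + i v_k)` and `ṽ_k = (1/√2)(conj(v_k) - i r conj(u_k))`
satisfy `∑ |ũ_k|² = ∑ |ṽ_k|² = r² ≠ 0` and `∑ ũ_k ṽ_k = 0`. -/
theorem stmt_0 (n : ℕ) (hn : 1 ≤ n) (u v : Fin (n + 1) → ℂ)
    (hu : ∑ k, ‖u k‖ ^ 2 = 1)
    (huv : ∑ k, u k * (starRingEnd ℂ) (v k) = 0)
    (hv : v ≠ 0)
    (r : ℝ) (hr : r = Real.sqrt (∑ k, ‖v k‖ ^ 2))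
    (ut vt : Fin (n + 1) → ℂ)
    (hut : ∀ k, ut k = (1 / (Real.sqrt 2 : ℂ)) * ((r : ℂ) * u k + Complex.I * v k))
    (hvt : ∀ k, vt k = (1 / (Real.sqrt 2 : ℂ)) *
      ((starRingEnd ℂ) (v k) - Complex.I * (r : ℂ) * (starRingEnd ℂ) (u k))) :
    (∑ k, ‖ut k‖ ^ 2 = r ^ 2) ∧
    (∑ k, ‖vt k‖ ^ 2 = r ^ 2) ∧
    r ^ 2 ≠ 0 ∧
    (∑ k, ut k * vt k = 0) := by
  have h2 : (Real.sqrt 2 : ℂ) * (Real.sqrt 2 : ℂ) = 2 := by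
    norm_cast
    rw [Real.mul_self_sqrt (by norm_num)]
  have h2' : (Real.sqrt 2 : ℂ) ^ 2 = 2 := by rw [sq]; exact h2
  have h2ne : (Real.sqrt 2 : ℂ) ≠ 0 := by
    intro h
    rw [h, mul_zero] at h2
    norm_num at h2
  -- sum of abs² as complex sum
  have hsum : ∀ (w : Fin (n + 1) → ℂ),
      ((∑ k, ‖w k‖ ^ 2 : ℝ) : ℂ) = ∑ k, w k * (starRingEnd ℂ) (w k) := by
    intro w
    push_cast
    refine Finset.sum_congr rfl fun k _ => ?_
    rw [Complex.mul_conj]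
    norm_cast
    exact Complex.sq_norm _
  have hu' : ∑ k, u k * (starRingEnd ℂ) (u k) = 1 := by
    rw [← hsum, hu]; norm_num
  -- r² = ∑ |v|²
  have hvnn : (0:ℝ) ≤ ∑ k, ‖v k‖ ^ 2 :=
    Finset.sum_nonneg fun k _ => by positivity
  have hr2 : (r : ℝ) ^ 2 = ∑ k, ‖v k‖ ^ 2 := by
    rw [hr, Real.sq_sqrt hvnn]
  have hv' : ∑ k, v k * (starRingEnd ℂ) (v k) = (r : ℂ) ^ 2 := by
    rw [← hsum, ← hr2]; norm_cast
  have hvu : ∑ k, v k * (starRingEnd ℂ) (u k) = 0 := by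
    have := congrArg (starRingEnd ℂ) huv
    simpa [map_sum, mul_comm] using this
  have hr2ne : r ^ 2 ≠ 0 := by
    rw [hr2]
    intro h
    apply hv
    funext k
    have hk : ‖v k‖ ^ 2 = 0 := by
      have := (Finset.sum_eq_zero_iff_of_nonneg (fun k _ => by positivity)).mp h k (by simp)
      exact this
    simpa using pow_eq_zero_iff (n := 2) (by norm_num) |>.mp hk
  refine ⟨?_, ?_, hr2ne, ?_⟩
  · have key : ((∑ k, ‖ut k‖ ^ 2 : ℝ) : ℂ) = ((r:ℝ)^2 : ℂ) := by
      rw [hsum]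
      have hpt : ∀ k, ut k * (starRingEnd ℂ) (ut k) =
          ((r:ℂ)^2 * (u k * (starRingEnd ℂ) (u k))
            + (-(r:ℂ) * Complex.I) * (u k * (starRingEnd ℂ) (v k))
            + ((r:ℂ) * Complex.I) * (v k * (starRingEnd ℂ) (u k))
            + v k * (starRingEnd ℂ) (v k)) / 2 := fun k => by
        rw [hut k]
        simp only [map_mul, map_add, map_div₀, map_one, Complex.conj_ofReal, Complex.conj_I]
        field_simp
        ring_nf
        simp only [h2', Complex.I_sq]
        ring
      rw [Finset.sum_congr rfl fun k _ => hpt k]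
      rw [← Finset.sum_div]
      simp only [Finset.sum_add_distrib, ← Finset.mul_sum, hu', hv', huv, hvu]
      push_cast
      ring
    exact_mod_cast key
  · have key : ((∑ k, ‖vt k‖ ^ 2 : ℝ) : ℂ) = ((r:ℝ)^2 : ℂ) := by
      rw [hsum]
      have hpt : ∀ k, vt k * (starRingEnd ℂ) (vt k) =
          ((r:ℂ)^2 * (u k * (starRingEnd ℂ) (u k))
            + ((r:ℂ) * Complex.I) * (u k * (starRingEnd ℂ) (v k))
            + (-(r:ℂ) * Complex.I) * (v k * (starRingEnd ℂ) (u k))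
            + v k * (starRingEnd ℂ) (v k)) / 2 := fun k => by
        rw [hvt k]
        simp only [map_mul, map_sub, map_div₀, map_one, Complex.conj_ofReal, Complex.conj_I,
          Complex.conj_conj]
        field_simp
        ring_nf
        simp only [h2', Complex.I_sq]
        ring
      rw [Finset.sum_congr rfl fun k _ => hpt k]
      rw [← Finset.sum_div]
      simp only [Finset.sum_add_distrib, ← Finset.mul_sum, hu', hv', huv, hvu]
      push_cast
      ring
    exact_mod_cast key
  · have hpt : ∀ k, ut k * vt k =
        ((r:ℂ) * (u k * (starRingEnd ℂ) (v k))
          + (-(r:ℂ)^2 * Complex.I) * (u k * (starRingEnd ℂ) (u k))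
          + Complex.I * (v k * (starRingEnd ℂ) (v k))
          + (r:ℂ) * (v k * (starRingEnd ℂ) (u k))) / 2 := fun k => by
      rw [hut k, hvt k]
      field_simp
      ring_nf
      simp only [h2', Complex.I_sq]
      ring
    rw [Finset.sum_congr rfl fun k _ => hpt k]
    rw [← Finset.sum_div]
    simp only [Finset.sum_add_distrib, ← Finset.mul_sum, hu', hv', huv, hvu]
    ring
end

section
/- Let n ≥ 1. The map t sending (u,v) to (ũ,ṽ), where ũ_k = (1/√2)(‖v‖·u_k + i·v_k) and ṽ_k = (1/√2)(conj(v_k) − i·‖v‖·conj(u_k)), is a bijection from the set X_C = {(u,v) ∈ ℂ^{n+1}×ℂ^{n+1} : ‖u‖ = 1, ∑_k u_k·conj(v_k) = 0, v ≠ 0} onto the set X̃_C = {(ũ,ṽ) ∈ ℂ^{n+1}×ℂ^{n+1} : ‖ũ‖ = ‖ṽ‖ ≠ 0, ∑_k ũ_k·ṽ_k = 0}. -/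
open Complex Finset

/-- The Hermitian norm `‖x‖ = √(∑ |x_k|²)` on `ℂ^{n+1}`. -/
noncomputable def hermNorm {n : ℕ} (x : Fin (n + 1) → ℂ) : ℝ :=
  Real.sqrt (∑ k, ‖x k‖ ^ 2)

/-- The map `t : (u,v) ↦ (ũ,ṽ)` with `ũ_k = (1/√2)(‖v‖ u_k + i v_k)` and
`ṽ_k = (1/√2)(conj(v_k) - i ‖v‖ conj(u_k))`. -/
noncomputable def tC {n : ℕ} (p : (Fin (n + 1) → ℂ) × (Fin (n + 1) → ℂ)) :
    (Fin (n + 1) → ℂ) × (Fin (n + 1) → ℂ) :=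
  (fun k => (1 / (Real.sqrt 2 : ℂ)) * ((hermNorm p.2 : ℂ) * p.1 k + Complex.I * p.2 k),
   fun k => (1 / (Real.sqrt 2 : ℂ)) *
     ((starRingEnd ℂ) (p.2 k) - Complex.I * (hermNorm p.2 : ℂ) * (starRingEnd ℂ) (p.1 k)))

/-- `X_C = {(u,v) : ‖u‖ = 1, ∑ u_k conj(v_k) = 0, v ≠ 0}`. -/
def XC (n : ℕ) : Set ((Fin (n + 1) → ℂ) × (Fin (n + 1) → ℂ)) :=
  {p | hermNorm p.1 = 1 ∧ (∑ k, p.1 k * (starRingEnd ℂ) (p.2 k)) = 0 ∧ p.2 ≠ 0}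

/-- `X̃_C = {(ũ,ṽ) : ‖ũ‖ = ‖ṽ‖ ≠ 0, ∑ ũ_k ṽ_k = 0}`. -/
def XtC (n : ℕ) : Set ((Fin (n + 1) → ℂ) × (Fin (n + 1) → ℂ)) :=
  {p | hermNorm p.1 = hermNorm p.2 ∧ hermNorm p.1 ≠ 0 ∧ (∑ k, p.1 k * p.2 k) = 0}

lemma hermNorm_nonneg {n : ℕ} (x : Fin (n + 1) → ℂ) : 0 ≤ hermNorm x :=
  Real.sqrt_nonneg _

lemma sum_conj_self {n : ℕ} (x : Fin (n + 1) → ℂ) :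
    ∑ k, x k * (starRingEnd ℂ) (x k) = ((hermNorm x : ℝ) : ℂ) ^ 2 := by
  have h0 : 0 ≤ ∑ k, ‖x k‖ ^ 2 :=
    Finset.sum_nonneg fun k _ => sq_nonneg _
  rw [hermNorm, ← Complex.ofReal_pow, Real.sq_sqrt h0]
  push_cast
  refine Finset.sum_congr rfl fun k _ => ?_
  rw [Complex.mul_conj, ← Complex.sq_norm]
  norm_cast

lemma hermNorm_eq {n : ℕ} (x : Fin (n + 1) → ℂ) (c : ℝ) (hc : 0 ≤ c)
    (h : ∑ k, x k * (starRingEnd ℂ) (x k) = ((c : ℝ) : ℂ) ^ 2) : hermNorm x = c := by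
  have h2 := sum_conj_self x
  rw [h] at h2
  have h3 : (c : ℝ) ^ 2 = (hermNorm x) ^ 2 := by
    exact_mod_cast h2
  have := congrArg Real.sqrt h3
  rw [Real.sqrt_sq (hermNorm_nonneg x), Real.sqrt_sq hc] at this
  exact this.symm

lemma hermNorm_eq_zero_iff {n : ℕ} (x : Fin (n + 1) → ℂ) : hermNorm x = 0 ↔ x = 0 := by
  rw [hermNorm, Real.sqrt_eq_zero (Finset.sum_nonneg fun k _ => sq_nonneg _)]
  constructor
  · intro h
    funext k
    have := (Finset.sum_eq_zero_iff_of_nonneg (fun k _ => sq_nonneg (‖x k‖))).1 h k (Finset.mem_univ k)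
    simpa using pow_eq_zero_iff (n := 2) (by norm_num) |>.1 this
  · intro h; simp [h]

lemma sum_expand {n : ℕ} (f g1 g2 g3 g4 : Fin (n + 1) → ℂ) (a b c d : ℂ)
    (h : ∀ k, f k = a * g1 k + b * g2 k + c * g3 k + d * g4 k) :
    ∑ k, f k = a * (∑ k, g1 k) + b * (∑ k, g2 k) + c * (∑ k, g3 k) + d * (∑ k, g4 k) := by
  simp [h, Finset.sum_add_distrib, Finset.mul_sum]

/-- The inverse map. -/
noncomputable def sC {n : ℕ} (p : (Fin (n + 1) → ℂ) × (Fin (n + 1) → ℂ)) :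
    (Fin (n + 1) → ℂ) × (Fin (n + 1) → ℂ) :=
  (fun k => (1 / ((Real.sqrt 2 : ℂ) * (hermNorm p.1 : ℂ))) *
      (p.1 k - Complex.I * (starRingEnd ℂ) (p.2 k)),
   fun k => (-Complex.I / (Real.sqrt 2 : ℂ)) * (p.1 k + Complex.I * (starRingEnd ℂ) (p.2 k)))

lemma sqrt2C_ne : ((Real.sqrt 2 : ℝ) : ℂ) ≠ 0 := by
  simp [Real.sqrt_eq_zero']

lemma I_pow_three : Complex.I ^ 3 = -Complex.I := by
  simp [pow_succ, Complex.I_mul_I]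

lemma sqrt2C_sq : ((Real.sqrt 2 : ℝ) : ℂ) ^ 2 = 2 := by
  rw [← Complex.ofReal_pow, Real.sq_sqrt (by norm_num : (0:ℝ) ≤ 2)]
  norm_num

section forward

variable {n : ℕ} (u v : Fin (n + 1) → ℂ)

lemma tC_sums (hA : ∑ k, u k * (starRingEnd ℂ) (u k) = 1)
    (hB : ∑ k, u k * (starRingEnd ℂ) (v k) = 0)
    (r : ℝ) (hrv : hermNorm v = r) :
    (∑ k, (tC (u, v)).1 k * (starRingEnd ℂ) ((tC (u, v)).1 k) = ((r:ℝ):ℂ)^2) ∧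
    (∑ k, (tC (u, v)).2 k * (starRingEnd ℂ) ((tC (u, v)).2 k) = ((r:ℝ):ℂ)^2) ∧
    (∑ k, (tC (u, v)).1 k * (tC (u, v)).2 k = 0) := by
  have hC : ∑ k, v k * (starRingEnd ℂ) (v k) = ((r:ℝ):ℂ)^2 := by
    rw [sum_conj_self, hrv]
  have hB' : ∑ k, v k * (starRingEnd ℂ) (u k) = 0 := by
    have := congrArg (starRingEnd ℂ) hB
    simpa [map_sum, mul_comm] using this
  set c : ℂ := 1 / (Real.sqrt 2 : ℂ) with hc
  refine ⟨?_, ?_, ?_⟩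
  · rw [sum_expand (fun k => (tC (u, v)).1 k * (starRingEnd ℂ) ((tC (u, v)).1 k))
      (fun k => u k * (starRingEnd ℂ) (u k)) (fun k => v k * (starRingEnd ℂ) (v k))
      (fun k => u k * (starRingEnd ℂ) (v k)) (fun k => v k * (starRingEnd ℂ) (u k))
      (c^2*(r:ℂ)^2) (c^2) (-Complex.I*(r:ℂ)*c^2) (Complex.I*(r:ℂ)*c^2)
      (fun k => by
        simp only [tC, hc, map_mul, map_add, map_sub, map_one, map_div₀, Complex.conj_ofReal,
          Complex.conj_I, Complex.conj_conj, hrv]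
        ring_nf
        all_goals simp [Complex.I_sq, _root_.I_pow_three]
        all_goals ring), hA, hB, hB', hC, hc]
    field_simp
    linear_combination -(r:ℂ)^2 * sqrt2C_sq
  · rw [sum_expand (fun k => (tC (u, v)).2 k * (starRingEnd ℂ) ((tC (u, v)).2 k))
      (fun k => u k * (starRingEnd ℂ) (u k)) (fun k => v k * (starRingEnd ℂ) (v k))
      (fun k => u k * (starRingEnd ℂ) (v k)) (fun k => v k * (starRingEnd ℂ) (u k))
      (c^2*(r:ℂ)^2) (c^2) (Complex.I*(r:ℂ)*c^2) (-Complex.I*(r:ℂ)*c^2)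
      (fun k => by
        simp only [tC, hc, map_mul, map_add, map_sub, map_one, map_div₀, Complex.conj_ofReal,
          Complex.conj_I, Complex.conj_conj, hrv]
        ring_nf
        all_goals simp [Complex.I_sq, _root_.I_pow_three]
        all_goals ring), hA, hB, hB', hC, hc]
    field_simp
    linear_combination -(r:ℂ)^2 * sqrt2C_sq
  · rw [sum_expand (fun k => (tC (u, v)).1 k * (tC (u, v)).2 k)
      (fun k => u k * (starRingEnd ℂ) (u k)) (fun k => v k * (starRingEnd ℂ) (v k))
      (fun k => u k * (starRingEnd ℂ) (v k)) (fun k => v k * (starRingEnd ℂ) (u k))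
      (-Complex.I*(r:ℂ)^2*c^2) (Complex.I*c^2) ((r:ℂ)*c^2) ((r:ℂ)*c^2)
      (fun k => by
        simp only [tC, hc, map_mul, map_add, map_sub, map_one, map_div₀, Complex.conj_ofReal,
          Complex.conj_I, Complex.conj_conj, hrv]
        ring_nf
        all_goals simp [Complex.I_sq, _root_.I_pow_three]
        all_goals ring), hA, hB, hB', hC, hc]
    field_simp
    ring

end forward

section backward

variable {n : ℕ} (w z : Fin (n + 1) → ℂ) (r : ℝ)

lemma sC_sums (hru : hermNorm w = r) (hr : ((r:ℝ):ℂ) ≠ 0)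
    (hC : ∑ k, z k * (starRingEnd ℂ) (z k) = ((r:ℝ):ℂ)^2)
    (hD : ∑ k, w k * z k = 0) :
    (∑ k, (sC (w, z)).1 k * (starRingEnd ℂ) ((sC (w, z)).1 k) = 1) ∧
    (∑ k, (sC (w, z)).1 k * (starRingEnd ℂ) ((sC (w, z)).2 k) = 0) ∧
    (∑ k, (sC (w, z)).2 k * (starRingEnd ℂ) ((sC (w, z)).2 k) = ((r:ℝ):ℂ)^2) := by
  have hA : ∑ k, w k * (starRingEnd ℂ) (w k) = ((r:ℝ):ℂ)^2 := by
    rw [sum_conj_self, hru]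
  have hD' : ∑ k, (starRingEnd ℂ) (w k) * (starRingEnd ℂ) (z k) = 0 := by
    have := congrArg (starRingEnd ℂ) hD
    simpa [map_sum] using this
  set c : ℂ := 1 / (Real.sqrt 2 : ℂ) with hcc
  set d : ℂ := 1 / ((Real.sqrt 2 : ℂ) * (r:ℂ)) with hdd
  refine ⟨?_, ?_, ?_⟩
  · rw [sum_expand (fun k => (sC (w, z)).1 k * (starRingEnd ℂ) ((sC (w, z)).1 k))
      (fun k => w k * (starRingEnd ℂ) (w k)) (fun k => z k * (starRingEnd ℂ) (z k))
      (fun k => w k * z k) (fun k => (starRingEnd ℂ) (w k) * (starRingEnd ℂ) (z k))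
      (d^2) (d^2) (Complex.I*d^2) (-Complex.I*d^2)
      (fun k => by
        simp only [sC, hru, hdd, map_mul, map_add, map_sub, map_one, map_div₀,
          Complex.conj_ofReal, Complex.conj_I, Complex.conj_conj]
        ring_nf
        all_goals simp [Complex.I_sq, _root_.I_pow_three]
        all_goals ring), hA, hC, hD, hD', hdd]
    field_simp
    linear_combination -(r:ℂ)^2 * sqrt2C_sq
  · rw [sum_expand (fun k => (sC (w, z)).1 k * (starRingEnd ℂ) ((sC (w, z)).2 k))
      (fun k => w k * (starRingEnd ℂ) (w k)) (fun k => z k * (starRingEnd ℂ) (z k))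
      (fun k => w k * z k) (fun k => (starRingEnd ℂ) (w k) * (starRingEnd ℂ) (z k))
      (Complex.I*d*c) (-Complex.I*d*c) (d*c) (d*c)
      (fun k => by
        simp only [sC, hru, hdd, hcc, map_mul, map_add, map_sub, map_one, map_div₀,
          Complex.conj_ofReal, Complex.conj_I, Complex.conj_conj, map_neg]
        ring_nf
        all_goals simp [Complex.I_sq, _root_.I_pow_three]
        all_goals ring), hA, hC, hD, hD', hdd, hcc]
    field_simp
    ring
  · rw [sum_expand (fun k => (sC (w, z)).2 k * (starRingEnd ℂ) ((sC (w, z)).2 k))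
      (fun k => w k * (starRingEnd ℂ) (w k)) (fun k => z k * (starRingEnd ℂ) (z k))
      (fun k => w k * z k) (fun k => (starRingEnd ℂ) (w k) * (starRingEnd ℂ) (z k))
      (c^2) (c^2) (-Complex.I*c^2) (Complex.I*c^2)
      (fun k => by
        simp only [sC, hru, hcc, map_mul, map_add, map_sub, map_one, map_div₀,
          Complex.conj_ofReal, Complex.conj_I, Complex.conj_conj, map_neg]
        ring_nf
        all_goals simp [Complex.I_sq, _root_.I_pow_three]
        all_goals ring), hA, hC, hD, hD', hcc]
    field_simp
    linear_combination -(r:ℂ)^2 * sqrt2C_sq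

end backward

lemma tC_left_inv {n : ℕ} {p : (Fin (n + 1) → ℂ) × (Fin (n + 1) → ℂ)} (hp : p ∈ XC n) :
    sC (tC p) = p := by
  obtain ⟨u, v⟩ := p
  obtain ⟨h1, hB, hv⟩ := hp
  set r : ℝ := hermNorm v with hrv
  have hr0 : 0 ≤ r := hermNorm_nonneg v
  have hrne : r ≠ 0 := fun h => hv ((hermNorm_eq_zero_iff v).1 h)
  have hrC : ((r:ℝ):ℂ) ≠ 0 := Complex.ofReal_ne_zero.2 hrne
  have hA : ∑ k, u k * (starRingEnd ℂ) (u k) = 1 := by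
    rw [sum_conj_self, h1]; norm_num
  have hsums := tC_sums u v hA hB r hrv.symm
  have hnt : hermNorm (tC (u, v)).1 = r := hermNorm_eq _ r hr0 hsums.1
  have e1 : (sC (tC (u, v))).1 = u := by
    funext k
    simp only [sC]
    rw [hnt]
    simp only [tC, map_mul, map_add, map_sub, map_one, map_div₀,
      Complex.conj_ofReal, Complex.conj_I, Complex.conj_conj, ← hrv]
    field_simp
    ring_nf
    all_goals simp [Complex.I_sq, _root_.I_pow_three]
    all_goals linear_combination -(r:ℂ) * u k * sqrt2C_sq
  have e2 : (sC (tC (u, v))).2 = v := by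
    funext k
    simp only [sC]
    simp only [tC, map_mul, map_add, map_sub, map_one, map_div₀,
      Complex.conj_ofReal, Complex.conj_I, Complex.conj_conj, ← hrv]
    field_simp
    ring_nf
    all_goals simp [Complex.I_sq, _root_.I_pow_three]
    all_goals exact Or.inl sqrt2C_sq.symm
  exact Prod.ext e1 e2

lemma sC_right_inv {n : ℕ} {q : (Fin (n + 1) → ℂ) × (Fin (n + 1) → ℂ)} (hq : q ∈ XtC n) :
    tC (sC q) = q := by
  obtain ⟨w, z⟩ := q
  obtain ⟨h1, h2, h3⟩ := hq
  set r : ℝ := hermNorm w with hrw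
  have hr0 : 0 ≤ r := hermNorm_nonneg w
  have hrC : ((r:ℝ):ℂ) ≠ 0 := Complex.ofReal_ne_zero.2 h2
  have hC : ∑ k, z k * (starRingEnd ℂ) (z k) = ((r:ℝ):ℂ)^2 := by
    rw [sum_conj_self, ← h1]
  have hsums := sC_sums w z r rfl hrC hC h3
  have hns : hermNorm (sC (w, z)).2 = r := hermNorm_eq _ r hr0 hsums.2.2
  have e1 : (tC (sC (w, z))).1 = w := by
    funext k
    simp only [tC]
    rw [hns]
    simp only [sC, map_mul, map_add, map_sub, map_one, map_div₀, map_neg,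
      Complex.conj_ofReal, Complex.conj_I, Complex.conj_conj]
    field_simp
    ring_nf
    all_goals simp [Complex.I_sq, _root_.I_pow_three]
    all_goals (try rw [← hrw])
    all_goals field_simp
    all_goals linear_combination (-w k) * sqrt2C_sq
  have e2 : (tC (sC (w, z))).2 = z := by
    funext k
    simp only [tC]
    rw [hns]
    simp only [sC, map_mul, map_add, map_sub, map_one, map_div₀, map_neg,
      Complex.conj_ofReal, Complex.conj_I, Complex.conj_conj]
    field_simp
    ring_nf
    all_goals simp [Complex.I_sq, _root_.I_pow_three]
    all_goals (try rw [← hrw])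
    all_goals field_simp
    all_goals linear_combination (-z k) * sqrt2C_sq
  exact Prod.ext e1 e2

lemma tC_mapsTo {n : ℕ} : Set.MapsTo tC (XC n) (XtC n) := by
  rintro ⟨u, v⟩ ⟨h1, hB, hv⟩
  set r : ℝ := hermNorm v with hrv
  have hr0 : 0 ≤ r := hermNorm_nonneg v
  have hrne : r ≠ 0 := fun h => hv ((hermNorm_eq_zero_iff v).1 h)
  have hA : ∑ k, u k * (starRingEnd ℂ) (u k) = 1 := by
    rw [sum_conj_self, h1]; norm_num
  have hsums := tC_sums u v hA hB r hrv.symm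
  have hn1 : hermNorm (tC (u, v)).1 = r := hermNorm_eq _ r hr0 hsums.1
  have hn2 : hermNorm (tC (u, v)).2 = r := hermNorm_eq _ r hr0 hsums.2.1
  exact ⟨hn1.trans hn2.symm, by rw [hn1]; exact hrne, hsums.2.2⟩

lemma sC_mapsTo {n : ℕ} : Set.MapsTo sC (XtC n) (XC n) := by
  rintro ⟨w, z⟩ ⟨h1, h2, h3⟩
  set r : ℝ := hermNorm w with hrw
  have hr0 : 0 ≤ r := hermNorm_nonneg w
  have hrC : ((r:ℝ):ℂ) ≠ 0 := Complex.ofReal_ne_zero.2 h2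
  have hC : ∑ k, z k * (starRingEnd ℂ) (z k) = ((r:ℝ):ℂ)^2 := by
    rw [sum_conj_self, ← h1]
  have hsums := sC_sums w z r rfl hrC hC h3
  refine ⟨hermNorm_eq _ 1 zero_le_one (by rw [hsums.1]; norm_num), hsums.2.1, ?_⟩
  intro hzero
  have : hermNorm (sC (w, z)).2 = 0 := (hermNorm_eq_zero_iff _).2 hzero
  rw [hermNorm_eq _ r hr0 hsums.2.2] at this
  exact h2 this

/-- `t` is a bijection from `X_C` onto `X̃_C`. -/
theorem stmt_1 (n : ℕ) (hn : 1 ≤ n) : Set.BijOn tC (XC n) (XtC n) :=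
  Set.InvOn.bijOn ⟨fun p hp => tC_left_inv hp, fun q hq => sC_right_inv hq⟩
    tC_mapsTo sC_mapsTo
end

section
/- Let n ≥ 0 and let a, b ∈ ℂ^{n+1} with a·b = ∑_i a_i b_i = 0. Then the functions f, g : ℂ^{n+1} × ℂ^{n+1} → ℂ defined by f(z,w) = (a·z)(b·conj(z)) + (a·w)(b·conj(w)) and g(z,w) = (a·z)(b·w) − (a·w)(b·z) are harmonic functions on ℝ^{4n+4} ≅ ℂ^{n+1} × ℂ^{n+1}, i.e. their Euclidean Laplacians vanish. -/
open Complex Finset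

private lemma second_dd_mul_add {E : Type*} [NormedAddCommGroup E] [NormedSpace ℝ E]
    (u1 v1 u2 v2 : E →L[ℝ] ℂ) (d x : E) :
    fderiv ℝ (fun y => fderiv ℝ (fun p => u1 p * v1 p + u2 p * v2 p) y d) x d
      = 2 * (u1 d * v1 d) + 2 * (u2 d * v2 d) := by
  have h1 : (fun y => fderiv ℝ (fun p => u1 p * v1 p + u2 p * v2 p) y d)
      = fun y => (u1 y * v1 d + v1 y * u1 d) + (u2 y * v2 d + v2 y * u2 d) := by
    funext y
    rw [(show HasFDerivAt (fun p => u1 p * v1 p + u2 p * v2 p) _ y from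
        ((u1.hasFDerivAt (x := y)).mul (v1.hasFDerivAt)).add
        ((u2.hasFDerivAt).mul (v2.hasFDerivAt))).fderiv]
    simp [smul_eq_mul]; try ring
  rw [h1]
  have h2 : HasFDerivAt
      (fun y => (u1 y * v1 d + v1 y * u1 d) + (u2 y * v2 d + v2 y * u2 d))
      (((v1 d) • u1 + (u1 d) • v1) + ((v2 d) • u2 + (u2 d) • v2)) x :=
    (((u1.hasFDerivAt).mul_const (v1 d)).add ((v1.hasFDerivAt).mul_const (u1 d))).add
      (((u2.hasFDerivAt).mul_const (v2 d)).add ((v2.hasFDerivAt).mul_const (u2 d)))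
  rw [h2.fderiv]
  simp [smul_eq_mul]; try ring

noncomputable def pA {n : ℕ} (a : Fin (n + 1) → ℂ) :
    ((Fin (n + 1) → ℂ) × (Fin (n + 1) → ℂ)) →L[ℝ] ℂ :=
  ∑ i, a i • ((ContinuousLinearMap.proj i).comp (ContinuousLinearMap.fst ℝ _ _))

noncomputable def pB {n : ℕ} (a : Fin (n + 1) → ℂ) :
    ((Fin (n + 1) → ℂ) × (Fin (n + 1) → ℂ)) →L[ℝ] ℂ :=
  ∑ i, a i • ((ContinuousLinearMap.proj i).comp (ContinuousLinearMap.snd ℝ _ _))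

noncomputable def pAc {n : ℕ} (a : Fin (n + 1) → ℂ) :
    ((Fin (n + 1) → ℂ) × (Fin (n + 1) → ℂ)) →L[ℝ] ℂ :=
  ∑ i, a i • (Complex.conjCLE.toContinuousLinearMap.comp
    ((ContinuousLinearMap.proj i).comp (ContinuousLinearMap.fst ℝ _ _)))

noncomputable def pBc {n : ℕ} (a : Fin (n + 1) → ℂ) :
    ((Fin (n + 1) → ℂ) × (Fin (n + 1) → ℂ)) →L[ℝ] ℂ :=
  ∑ i, a i • (Complex.conjCLE.toContinuousLinearMap.comp
    ((ContinuousLinearMap.proj i).comp (ContinuousLinearMap.snd ℝ _ _)))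

lemma pA_apply {n : ℕ} (a : Fin (n + 1) → ℂ) (p) :
    pA a p = ∑ i, a i * p.1 i := by
  simp [pA, ContinuousLinearMap.sum_apply, smul_eq_mul]

lemma pB_apply {n : ℕ} (a : Fin (n + 1) → ℂ) (p) :
    pB a p = ∑ i, a i * p.2 i := by
  simp [pB, ContinuousLinearMap.sum_apply, smul_eq_mul]

lemma pAc_apply {n : ℕ} (a : Fin (n + 1) → ℂ) (p) :
    pAc a p = ∑ i, a i * (starRingEnd ℂ) (p.1 i) := by
  simp [pAc, ContinuousLinearMap.sum_apply, smul_eq_mul]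

lemma pBc_apply {n : ℕ} (a : Fin (n + 1) → ℂ) (p) :
    pBc a p = ∑ i, a i * (starRingEnd ℂ) (p.2 i) := by
  simp [pBc, ContinuousLinearMap.sum_apply, smul_eq_mul]


/-- The Euclidean Laplacian on `ℂ^{n+1} × ℂ^{n+1} ≅ ℝ^{4n+4}`: the sum of the
second directional derivatives (over `ℝ`) along the real orthonormal basis
directions `(e_i, 0)`, `(i·e_i, 0)`, `(0, e_i)`, `(0, i·e_i)`. -/
noncomputable def euclLaplacian2 {n : ℕ}
    (f : (Fin (n + 1) → ℂ) × (Fin (n + 1) → ℂ) → ℂ)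
    (x : (Fin (n + 1) → ℂ) × (Fin (n + 1) → ℂ)) : ℂ :=
  ∑ i : Fin (n + 1),
    (fderiv ℝ (fun y => fderiv ℝ f y (Pi.single i 1, 0)) x (Pi.single i 1, 0) +
     fderiv ℝ (fun y => fderiv ℝ f y (Pi.single i Complex.I, 0)) x
       (Pi.single i Complex.I, 0) +
     fderiv ℝ (fun y => fderiv ℝ f y (0, Pi.single i 1)) x (0, Pi.single i 1) +
     fderiv ℝ (fun y => fderiv ℝ f y (0, Pi.single i Complex.I)) x
       (0, Pi.single i Complex.I))

/-- for `a·b = 0`, the functions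
`f(z,w) = (a·z)(b·conj z) + (a·w)(b·conj w)` and
`g(z,w) = (a·z)(b·w) - (a·w)(b·z)` are harmonic on `ℝ^{4n+4}`. -/
theorem stmt_11 (n : ℕ) (a b : Fin (n + 1) → ℂ) (hab : (∑ i, a i * b i) = 0)
    (f g : (Fin (n + 1) → ℂ) × (Fin (n + 1) → ℂ) → ℂ)
    (hf : ∀ p, f p = (∑ i, a i * p.1 i) * (∑ i, b i * (starRingEnd ℂ) (p.1 i)) +
      (∑ i, a i * p.2 i) * (∑ i, b i * (starRingEnd ℂ) (p.2 i)))
    (hg : ∀ p, g p = (∑ i, a i * p.1 i) * (∑ i, b i * p.2 i) -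
      (∑ i, a i * p.2 i) * (∑ i, b i * p.1 i)) :
    (∀ p, euclLaplacian2 f p = 0) ∧ (∀ p, euclLaplacian2 g p = 0) := by

  have hfe : f = fun p => pA a p * pAc b p + pB a p * pBc b p := by
    funext p; rw [hf, pA_apply, pAc_apply, pB_apply, pBc_apply]
  have hge : g = fun p => pA a p * pB b p + (-(pB a)) p * pA b p := by
    funext p
    rw [hg]
    simp only [ContinuousLinearMap.neg_apply, pA_apply, pB_apply]
    ring
  constructor
  · intro p
    rw [hfe]
    unfold euclLaplacian2
    simp only [second_dd_mul_add]
    have key : ∀ i : Fin (n+1),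
        (2 * (pA a (Pi.single i 1, 0) * pAc b (Pi.single i 1, 0)) +
           2 * (pB a (Pi.single i 1, 0) * pBc b (Pi.single i 1, 0)) +
         (2 * (pA a (Pi.single i Complex.I, 0) * pAc b (Pi.single i Complex.I, 0)) +
           2 * (pB a (Pi.single i Complex.I, 0) * pBc b (Pi.single i Complex.I, 0))) +
         (2 * (pA a (0, Pi.single i 1) * pAc b (0, Pi.single i 1)) +
           2 * (pB a (0, Pi.single i 1) * pBc b (0, Pi.single i 1))) +
         (2 * (pA a (0, Pi.single i Complex.I) * pAc b (0, Pi.single i Complex.I)) +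
           2 * (pB a (0, Pi.single i Complex.I) * pBc b (0, Pi.single i Complex.I))))
        = 8 * (a i * b i) := by
      intro i
      simp [pA_apply, pAc_apply, pB_apply, pBc_apply, Pi.single_apply, mul_ite,
        apply_ite (starRingEnd ℂ), Finset.sum_ite_eq']
      ring_nf
      simp [Complex.I_sq]
      ring
    rw [Finset.sum_congr rfl (fun i _ => key i), ← Finset.mul_sum, hab, mul_zero]
  · intro p
    rw [hge]
    unfold euclLaplacian2
    simp only [second_dd_mul_add]
    have key : ∀ i : Fin (n+1),
        (2 * (pA a (Pi.single i 1, 0) * pB b (Pi.single i 1, 0)) +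
           2 * ((-(pB a)) (Pi.single i 1, 0) * pA b (Pi.single i 1, 0)) +
         (2 * (pA a (Pi.single i Complex.I, 0) * pB b (Pi.single i Complex.I, 0)) +
           2 * ((-(pB a)) (Pi.single i Complex.I, 0) * pA b (Pi.single i Complex.I, 0))) +
         (2 * (pA a (0, Pi.single i 1) * pB b (0, Pi.single i 1)) +
           2 * ((-(pB a)) (0, Pi.single i 1) * pA b (0, Pi.single i 1))) +
         (2 * (pA a (0, Pi.single i Complex.I) * pB b (0, Pi.single i Complex.I)) +
           2 * ((-(pB a)) (0, Pi.single i Complex.I) * pA b (0, Pi.single i Complex.I))))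
        = 0 := by
      intro i
      simp [pA_apply, pAc_apply, pB_apply, pBc_apply, Pi.single_apply, mul_ite,
        Finset.sum_ite_eq']
    rw [Finset.sum_congr rfl (fun i _ => key i), Finset.sum_const, smul_zero]
end

section
/- Let n ≥ 0, let a, b, c, d ∈ ℂ^{n+1}, and define g : ℂ^{n+1} × ℂ^{n+1} → ℂ by g(z,w) = (a·z + b·w)(c·conj(w) − d·conj(z)) − (c·z + d·w)(a·conj(w) − b·conj(z)). Then for every integer k ≥ 1 the Euclidean Laplacian of g^k on ℝ^{4n+4} ≅ ℂ^{n+1} × ℂ^{n+1} equals Δ(g^k) = 4k(k+1)·(b·c − a·d)·g^{k−1}. In particular, if a·d = b·c, then g^k is a harmonic function on ℝ^{4n+4}. -/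
open Complex Finset

namespace Stmt12Aux

variable {n : ℕ}

/-- `E n` is `ℂ^{n+1} × ℂ^{n+1}`. -/
abbrev E (n : ℕ) := (Fin (n + 1) → ℂ) × (Fin (n + 1) → ℂ)

/-- The holomorphic linear functional `p ↦ ∑ u i p.1 i + ∑ v i p.2 i`. -/
noncomputable def L1 (u v : Fin (n + 1) → ℂ) : E n →L[ℝ] ℂ :=
  LinearMap.toContinuousLinearMap
  { toFun := fun p => (∑ i, u i * p.1 i) + ∑ i, v i * p.2 i
    map_add' := by
      intro p q
      simp only [Prod.fst_add, Prod.snd_add, Pi.add_apply, mul_add,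
        Finset.sum_add_distrib]
      ring
    map_smul' := by
      intro r p
      simp only [Prod.smul_fst, Prod.smul_snd, Pi.smul_apply, Complex.real_smul,
        RingHom.id_apply, Finset.mul_sum, smul_eq_mul, mul_add]
      congr 1 <;> exact Finset.sum_congr rfl fun i _ => by ring }

@[simp] lemma L1_apply (u v : Fin (n + 1) → ℂ) (p : E n) :
    L1 u v p = (∑ i, u i * p.1 i) + ∑ i, v i * p.2 i := rfl

/-- The antiholomorphic linear functional
`p ↦ ∑ u i conj (p.1 i) + ∑ v i conj (p.2 i)`. -/
noncomputable def L2 (u v : Fin (n + 1) → ℂ) : E n →L[ℝ] ℂ :=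
  LinearMap.toContinuousLinearMap
  { toFun := fun p => (∑ i, u i * (starRingEnd ℂ) (p.1 i)) +
      ∑ i, v i * (starRingEnd ℂ) (p.2 i)
    map_add' := by
      intro p q
      simp only [Prod.fst_add, Prod.snd_add, Pi.add_apply, map_add, mul_add,
        Finset.sum_add_distrib]
      ring
    map_smul' := by
      intro r p
      simp only [Prod.smul_fst, Prod.smul_snd, Pi.smul_apply, Complex.real_smul,
        map_mul, Complex.conj_ofReal, RingHom.id_apply, Finset.mul_sum,
        smul_eq_mul, mul_add]
      congr 1 <;> exact Finset.sum_congr rfl fun i _ => by ring }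

@[simp] lemma L2_apply (u v : Fin (n + 1) → ℂ) (p : E n) :
    L2 u v p = (∑ i, u i * (starRingEnd ℂ) (p.1 i)) +
      ∑ i, v i * (starRingEnd ℂ) (p.2 i) := rfl

lemma sum_single (u : Fin (n + 1) → ℂ) (i : Fin (n + 1)) (z : ℂ) :
    (∑ j, u j * (Pi.single i z : Fin (n + 1) → ℂ) j) = u i * z := by
  rw [Finset.sum_eq_single i]
  · simp
  · intro j _ hj; simp [Pi.single_apply, hj]
  · simp

lemma sum_single_conj (u : Fin (n + 1) → ℂ) (i : Fin (n + 1)) (z : ℂ) :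
    (∑ j, u j * (starRingEnd ℂ) ((Pi.single i z : Fin (n + 1) → ℂ) j))
      = u i * (starRingEnd ℂ) z := by
  rw [Finset.sum_eq_single i]
  · simp
  · intro j _ hj; simp [Pi.single_apply, hj]
  · simp

@[simp] lemma L1_single_fst (u v : Fin (n + 1) → ℂ) (i : Fin (n + 1)) (z : ℂ) :
    L1 u v ((Pi.single i z : Fin (n + 1) → ℂ), 0) = u i * z := by
  simp [sum_single]

@[simp] lemma L1_single_snd (u v : Fin (n + 1) → ℂ) (i : Fin (n + 1)) (z : ℂ) :
    L1 u v (0, (Pi.single i z : Fin (n + 1) → ℂ)) = v i * z := by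
  simp [sum_single]

@[simp] lemma L2_single_fst (u v : Fin (n + 1) → ℂ) (i : Fin (n + 1)) (z : ℂ) :
    L2 u v ((Pi.single i z : Fin (n + 1) → ℂ), 0) = u i * (starRingEnd ℂ) z := by
  simp [sum_single_conj]

@[simp] lemma L2_single_snd (u v : Fin (n + 1) → ℂ) (i : Fin (n + 1)) (z : ℂ) :
    L2 u v (0, (Pi.single i z : Fin (n + 1) → ℂ)) = v i * (starRingEnd ℂ) z := by
  simp [sum_single_conj]

/-- The power rule for `ℂ`-valued functions, Fréchet version over `ℝ`. -/
lemma hasFDerivAt_pow' {f : E n → ℂ} {f' : E n →L[ℝ] ℂ} {x : E n}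
    (h : HasFDerivAt f f' x) (m : ℕ) :
    HasFDerivAt (fun y => f y ^ m) (((m : ℂ) * f x ^ (m - 1)) • f') x := by
  induction m with
  | zero =>
      have h0 : HasFDerivAt (fun _ : E n => (1 : ℂ)) (0 : E n →L[ℝ] ℂ) x :=
        hasFDerivAt_const _ _
      have hfun : (fun y : E n => f y ^ 0) = fun _ => (1 : ℂ) := by
        funext y; simp
      rw [hfun]
      refine h0.congr_fderiv ?_
      refine ContinuousLinearMap.ext fun v => ?_
      simp
  | succ m ih =>
      have h' := ih.mul h
      have hfun : (fun y => f y ^ m * f y) = fun y => f y ^ (m + 1) := by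
        funext y; rw [← pow_succ]
      rw [show ((fun y : E n => f y ^ m) * f) = fun y => f y ^ m * f y from rfl, hfun] at h'
      refine h'.congr_fderiv ?_
      refine ContinuousLinearMap.ext fun v => ?_
      simp only [ContinuousLinearMap.add_apply, ContinuousLinearMap.smul_apply,
        smul_eq_mul]
      rcases m with _ | j
      · simp
      · simp only [Nat.add_sub_cancel]
        push_cast
        ring

variable (a b c d : Fin (n + 1) → ℂ)

/-- The derivative of `g` at `x`, as a continuous linear map. -/
noncomputable def Dg (x : E n) : E n →L[ℝ] ℂ :=
  L1 a b x • L2 (fun i => -(d i)) c + L2 (fun i => -(d i)) c x • L1 a b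
  - (L1 c d x • L2 (fun i => -(b i)) a + L2 (fun i => -(b i)) a x • L1 c d)

lemma Dg_apply (x v : E n) : Dg a b c d x v =
    L1 a b x * L2 (fun i => -(d i)) c v + L2 (fun i => -(d i)) c x * L1 a b v
    - (L1 c d x * L2 (fun i => -(b i)) a v + L2 (fun i => -(b i)) a x * L1 c d v) := by
  simp only [Dg, ContinuousLinearMap.add_apply, ContinuousLinearMap.sub_apply,
    ContinuousLinearMap.smul_apply, smul_eq_mul]

variable {g : E n → ℂ}

lemma g_eq' (hg : ∀ p : E n, g p =
      ((∑ i, a i * p.1 i) + (∑ i, b i * p.2 i)) *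
        ((∑ i, c i * (starRingEnd ℂ) (p.2 i)) - (∑ i, d i * (starRingEnd ℂ) (p.1 i))) -
      ((∑ i, c i * p.1 i) + (∑ i, d i * p.2 i)) *
        ((∑ i, a i * (starRingEnd ℂ) (p.2 i)) - (∑ i, b i * (starRingEnd ℂ) (p.1 i))))
    (p : E n) :
    g p = L1 a b p * L2 (fun i => -(d i)) c p - L1 c d p * L2 (fun i => -(b i)) a p := by
  rw [hg p]
  simp only [L1_apply, L2_apply, neg_mul, Finset.sum_neg_distrib]
  ring

lemma hasDg (hg : ∀ p : E n, g p =
      ((∑ i, a i * p.1 i) + (∑ i, b i * p.2 i)) *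
        ((∑ i, c i * (starRingEnd ℂ) (p.2 i)) - (∑ i, d i * (starRingEnd ℂ) (p.1 i))) -
      ((∑ i, c i * p.1 i) + (∑ i, d i * p.2 i)) *
        ((∑ i, a i * (starRingEnd ℂ) (p.2 i)) - (∑ i, b i * (starRingEnd ℂ) (p.1 i))))
    (x : E n) : HasFDerivAt g (Dg a b c d x) x := by
  have hge : g = fun p =>
      L1 a b p * L2 (fun i => -(d i)) c p - L1 c d p * L2 (fun i => -(b i)) a p :=
    funext (g_eq' a b c d hg)
  rw [hge]
  exact ((L1 a b).hasFDerivAt.mul (L2 (fun i => -(d i)) c).hasFDerivAt).sub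
    ((L1 c d).hasFDerivAt.mul (L2 (fun i => -(b i)) a).hasFDerivAt)

lemma D2 (hg : ∀ p : E n, g p =
      ((∑ i, a i * p.1 i) + (∑ i, b i * p.2 i)) *
        ((∑ i, c i * (starRingEnd ℂ) (p.2 i)) - (∑ i, d i * (starRingEnd ℂ) (p.1 i))) -
      ((∑ i, c i * p.1 i) + (∑ i, d i * p.2 i)) *
        ((∑ i, a i * (starRingEnd ℂ) (p.2 i)) - (∑ i, b i * (starRingEnd ℂ) (p.1 i))))
    (k : ℕ) (x v : E n) :
    fderiv ℝ (fun y => fderiv ℝ (fun z => g z ^ k) y v) x v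
    = (k : ℂ) * (g x ^ (k - 1) *
          (2 * (L1 a b v * L2 (fun i => -(d i)) c v
                - L1 c d v * L2 (fun i => -(b i)) a v))
        + ((k - 1 : ℕ) : ℂ) * g x ^ (k - 1 - 1) * Dg a b c d x v * Dg a b c d x v) := by
  have hfd1 : (fun y => fderiv ℝ (fun z => g z ^ k) y v)
      = fun y => (k : ℂ) * (g y ^ (k - 1) * (Dg a b c d y v)) := by
    funext y
    rw [(hasFDerivAt_pow' (hasDg a b c d hg y) k).fderiv]
    simp only [ContinuousLinearMap.smul_apply, smul_eq_mul]
    ring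
  rw [hfd1]
  set Ψ : E n →L[ℝ] ℂ :=
    L2 (fun i => -(d i)) c v • L1 a b + L1 a b v • L2 (fun i => -(d i)) c
    - (L2 (fun i => -(b i)) a v • L1 c d + L1 c d v • L2 (fun i => -(b i)) a) with hΨ
  have h2 : HasFDerivAt (fun y => Dg a b c d y v) Ψ x := by
    have hfun : (fun y => Dg a b c d y v) = ⇑Ψ := by
      funext y
      rw [Dg_apply]
      simp only [hΨ, ContinuousLinearMap.add_apply, ContinuousLinearMap.sub_apply,
        ContinuousLinearMap.smul_apply, smul_eq_mul]
      ring
    rw [hfun]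
    exact Ψ.hasFDerivAt
  have h1 : HasFDerivAt (fun y => g y ^ (k - 1))
      ((((k - 1 : ℕ) : ℂ) * g x ^ (k - 1 - 1)) • (Dg a b c d x)) x :=
    hasFDerivAt_pow' (hasDg a b c d hg x) (k - 1)
  have h3 := (h1.mul h2).const_mul ((k : ℂ))
  rw [HasFDerivAt.fderiv (f := fun y => (k : ℂ) * (g y ^ (k - 1) * (Dg a b c d y) v)) h3]
  simp only [ContinuousLinearMap.smul_apply, ContinuousLinearMap.add_apply,
    ContinuousLinearMap.sub_apply, smul_eq_mul, hΨ]
  ring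

end Stmt12Aux

open Stmt12Aux in
/-- for
`g(z,w) = (a·z + b·w)(c·conj w - d·conj z) - (c·z + d·w)(a·conj w - b·conj z)`
and `k ≥ 1`, one has `Δ(g^k) = 4k(k+1)(b·c - a·d) g^{k-1}`; in particular
`a·d = b·c` makes `g^k` harmonic on `ℝ^{4n+4}`. -/
theorem stmt_12 (n : ℕ) (a b c d : Fin (n + 1) → ℂ) (k : ℕ) (hk : 1 ≤ k)
    (g : (Fin (n + 1) → ℂ) × (Fin (n + 1) → ℂ) → ℂ)
    (hg : ∀ p, g p =
      ((∑ i, a i * p.1 i) + (∑ i, b i * p.2 i)) *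
        ((∑ i, c i * (starRingEnd ℂ) (p.2 i)) - (∑ i, d i * (starRingEnd ℂ) (p.1 i))) -
      ((∑ i, c i * p.1 i) + (∑ i, d i * p.2 i)) *
        ((∑ i, a i * (starRingEnd ℂ) (p.2 i)) - (∑ i, b i * (starRingEnd ℂ) (p.1 i)))) :
    (∀ p, euclLaplacian2 (fun x => g x ^ k) p =
      4 * (k : ℂ) * ((k : ℂ) + 1) *
        ((∑ i, b i * c i) - (∑ i, a i * d i)) * g p ^ (k - 1)) ∧
    ((∑ i, a i * d i) = (∑ i, b i * c i) →
      ∀ p, euclLaplacian2 (fun x => g x ^ k) p = 0) := by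
  classical
  have key : ∀ p, euclLaplacian2 (fun x => g x ^ k) p =
      4 * (k : ℂ) * ((k : ℂ) + 1) *
        ((∑ i, b i * c i) - (∑ i, a i * d i)) * g p ^ (k - 1) := by
    intro p
    unfold euclLaplacian2
    have expand : ∀ i : Fin (n + 1),
        (fderiv ℝ (fun y => fderiv ℝ (fun z => g z ^ k) y (Pi.single i 1, 0)) p
            (Pi.single i 1, 0) +
         fderiv ℝ (fun y => fderiv ℝ (fun z => g z ^ k) y (Pi.single i Complex.I, 0)) p
            (Pi.single i Complex.I, 0) +
         fderiv ℝ (fun y => fderiv ℝ (fun z => g z ^ k) y (0, Pi.single i 1)) p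
            (0, Pi.single i 1) +
         fderiv ℝ (fun y => fderiv ℝ (fun z => g z ^ k) y (0, Pi.single i Complex.I)) p
            (0, Pi.single i Complex.I))
        = ((k : ℂ) * g p ^ (k - 1) * 8
            + (k : ℂ) * ((k - 1 : ℕ) : ℂ) * g p ^ (k - 1 - 1) * 4 * g p)
          * (b i * c i - a i * d i) := by
      intro i
      rw [D2 a b c d hg k p (Pi.single i 1, 0),
        D2 a b c d hg k p (Pi.single i Complex.I, 0),
        D2 a b c d hg k p (0, Pi.single i 1),
        D2 a b c d hg k p (0, Pi.single i Complex.I)]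
      rw [Dg_apply, Dg_apply, Dg_apply, Dg_apply]
      rw [g_eq' a b c d hg p]
      simp only [L1_single_fst, L1_single_snd, L2_single_fst, L2_single_snd,
        map_one, Complex.conj_I, neg_neg, mul_one, neg_mul, mul_neg]
      generalize L1 a b p = A
      generalize L1 c d p = B
      generalize L2 (fun i => -(d i)) c p = C
      generalize L2 (fun i => -(b i)) a p = D
      ring_nf
      simp only [Complex.I_sq]
      ring
    rw [Finset.sum_congr rfl fun i _ => expand i, ← Finset.mul_sum,
      Finset.sum_sub_distrib]
    obtain ⟨m, rfl⟩ : ∃ m, k = m + 1 := ⟨k - 1, by omega⟩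
    rcases m with _ | j
    · norm_num
    · have h1 : j + 1 + 1 - 1 = j + 1 := rfl
      have h2 : j + 1 + 1 - 1 - 1 = j := rfl
      rw [h2, h1]
      push_cast
      ring
  exact ⟨key, fun h p => by rw [key p, h]; ring⟩
end

section
/- Let n be a positive integer such that every prime factor of n is congruent to 2 modulo 3. Then the only pair of positive integers (x, y) with x ≥ 1 and y ≥ 1 satisfying x² − xy + y² = n² is (x, y) = (n, n). -/
private lemma zmod2_case : ∀ a b : ZMod 2, a ^ 2 - a * b + b ^ 2 = 0 → a = 0 ∧ b = 0 := by
  decide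

private lemma key_dvd (p : ℕ) (hp : p.Prime) (hp2 : p % 3 = 2) (x y : ℤ)
    (hd : (p : ℤ) ∣ x ^ 2 - x * y + y ^ 2) : (p : ℤ) ∣ x ∧ (p : ℤ) ∣ y := by
  haveI : Fact p.Prime := ⟨hp⟩
  have e : ((x : ZMod p) ^ 2 - (x : ZMod p) * (y : ZMod p) + (y : ZMod p) ^ 2) = 0 := by
    have := (ZMod.intCast_zmod_eq_zero_iff_dvd _ p).2 hd
    push_cast at this
    linear_combination this
  rcases eq_or_ne p 2 with rfl | hpodd
  · -- p = 2 : case check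
    obtain ⟨ha, hb⟩ := zmod2_case _ _ e
    exact ⟨(ZMod.intCast_zmod_eq_zero_iff_dvd _ 2).1 ha,
      (ZMod.intCast_zmod_eq_zero_iff_dvd _ 2).1 hb⟩
  · set a : ZMod p := ((x : ℤ) : ZMod p) with ha
    set b : ZMod p := ((y : ℤ) : ZMod p) with hb
    have hb0 : b = 0 := by
      by_contra hb0
      -- t = a / b satisfies t^2 - t + 1 = 0
      set t : ZMod p := a * b⁻¹ with htdef
      have ht : t ^ 2 - t + 1 = 0 := by
        have hbinv : b * b⁻¹ = 1 := ZMod.mul_inv_of_unit b (Ne.isUnit hb0)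
        rw [htdef]
        linear_combination ((b⁻¹) ^ 2) * e - (1 + b * b⁻¹ - a * b⁻¹) * hbinv
      have hp2' : (2 : ZMod p) ≠ 0 := by
        intro h2
        have h2' : ((2 : ℕ) : ZMod p) = 0 := by exact_mod_cast h2
        have := (ZMod.natCast_eq_zero_iff 2 p).1 h2'
        have := (Nat.prime_dvd_prime_iff_eq hp Nat.prime_two).1 this
        exact hpodd this
      have hp3' : (3 : ZMod p) ≠ 0 := by
        intro h3
        have h3' : ((3 : ℕ) : ZMod p) = 0 := by exact_mod_cast h3
        have := (ZMod.natCast_eq_zero_iff 3 p).1 h3'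
        have := (Nat.prime_dvd_prime_iff_eq hp Nat.prime_three).1 this
        omega
      have ht1 : t ≠ 1 := by
        intro h1; rw [h1] at ht; norm_num at ht
      have htm1 : t ≠ -1 := by
        intro h1; rw [h1] at ht
        apply hp3'; linear_combination ht
      have ht0 : t ≠ 0 := by
        intro h0; rw [h0] at ht; norm_num at ht
      have ht6 : t ^ 6 = 1 := by
        have h3 : t ^ 3 = -1 := by linear_combination (t + 1) * ht
        calc t ^ 6 = (t ^ 3) ^ 2 := by ring
        _ = 1 := by rw [h3]; ring
      have ht2 : t ^ 2 ≠ 1 := by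
        intro h2
        have : (t - 1) * (t + 1) = 0 := by linear_combination h2
        rcases mul_eq_zero.1 this with h | h
        · exact ht1 (by linear_combination h)
        · exact htm1 (by linear_combination h)
      -- the unit t^2 has order 3
      set u : (ZMod p)ˣ := Units.mk0 t ht0 with hu
      have hu3 : (u ^ 2) ^ 3 = 1 := by
        ext; push_cast [hu]; rw [← pow_mul]; exact_mod_cast ht6
      have hune : u ^ 2 ≠ 1 := by
        intro h1
        apply ht2
        have := congrArg Units.val h1
        simpa [hu] using this
      haveI : Fact (Nat.Prime 3) := ⟨Nat.prime_three⟩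
      have hord : orderOf (u ^ 2) = 3 := orderOf_eq_prime hu3 hune
      have hdvd : orderOf (u ^ 2) ∣ Fintype.card (ZMod p)ˣ := orderOf_dvd_card
      rw [hord, ZMod.card_units p] at hdvd
      have := hp.two_le
      omega
    refine ⟨?_, (ZMod.intCast_zmod_eq_zero_iff_dvd _ p).1 hb0⟩
    have ha0 : a = 0 := by
      have : a ^ 2 = 0 := by rw [hb0] at e; linear_combination e
      exact pow_eq_zero_iff (n := 2) (by norm_num) |>.1 this
    exact (ZMod.intCast_zmod_eq_zero_iff_dvd _ p).1 ha0

private lemma stmt_15_aux : ∀ n : ℕ, 0 < n →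
    (∀ p : ℕ, p.Prime → p ∣ n → p % 3 = 2) →
    ∀ x y : ℤ, 1 ≤ x → 1 ≤ y → x ^ 2 - x * y + y ^ 2 = (n : ℤ) ^ 2 →
    x = n ∧ y = n := by
  intro n
  induction n using Nat.strong_induction_on with
  | _ n ih =>
    intro hn h x y hx hy hxy
    rcases eq_or_lt_of_le (show 1 ≤ n from hn) with h1 | h1
    · -- n = 1
      have hn1 : n = 1 := h1.symm
      subst hn1
      norm_num at hxy
      have hxy1 : x * y = 1 := by nlinarith [sq_nonneg (x - y)]
      have hx1 : x = 1 := by nlinarith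
      have hy1 : y = 1 := by nlinarith
      simp [hx1, hy1]
    · -- n > 1 : strip off the minimal prime factor
      set p := n.minFac with hpdef
      have hp : p.Prime := Nat.minFac_prime (by omega)
      have hpn : p ∣ n := Nat.minFac_dvd n
      have hp2 : p % 3 = 2 := h p hp hpn
      obtain ⟨m, hm⟩ := hpn
      have hm0 : 0 < m := by
        rcases Nat.eq_zero_or_pos m with rfl | hm0
        · omega
        · exact hm0
      have hdvd : (p : ℤ) ∣ x ^ 2 - x * y + y ^ 2 := by
        rw [hxy, hm]
        push_cast
        exact ⟨p * m ^ 2, by ring⟩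
      obtain ⟨hpx, hpy⟩ := key_dvd p hp hp2 x y hdvd
      obtain ⟨a, rfl⟩ := hpx
      obtain ⟨b, rfl⟩ := hpy
      have hppos : (0 : ℤ) < p := by exact_mod_cast hp.pos
      have ha : 1 ≤ a := by nlinarith
      have hb : 1 ≤ b := by nlinarith
      have hab : a ^ 2 - a * b + b ^ 2 = (m : ℤ) ^ 2 := by
        have h2 : (p : ℤ) ^ 2 * (a ^ 2 - a * b + b ^ 2) = (p : ℤ) ^ 2 * (m : ℤ) ^ 2 := by
          rw [hm] at hxy; push_cast at hxy ⊢; linear_combination hxy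
        exact mul_left_cancel₀ (by positivity) h2
      have hmlt : m < n := by
        have := hp.two_le
        calc m < p * m := by nlinarith
        _ = n := hm.symm
      have hmh : ∀ q : ℕ, q.Prime → q ∣ m → q % 3 = 2 := fun q hq hqm =>
        h q hq (hqm.trans ⟨p, by rw [hm]; ring⟩)
      obtain ⟨hA, hB⟩ := ih m hmlt hm0 hmh a b ha hb hab
      constructor
      · rw [hA, hm]; push_cast; ring
      · rw [hB, hm]; push_cast; ring

/-- if every prime factor of the positive integer `n` is
congruent to `2` modulo `3`, then the only pair of positive integers `(x, y)`
with `x² - xy + y² = n²` is `(x, y) = (n, n)`. -/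
theorem stmt_15 (n : ℕ) (hn : 0 < n)
    (h : ∀ p : ℕ, p.Prime → p ∣ n → p % 3 = 2)
    (x y : ℤ) (hx : 1 ≤ x) (hy : 1 ≤ y)
    (hxy : x ^ 2 - x * y + y ^ 2 = (n : ℤ) ^ 2) :
    x = n ∧ y = n := by
  exact stmt_15_aux n hn h x y hx hy hxy
end
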